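/- Let ū ∈ U with ‖ū‖_{X*} ≤ 1/α minimize u ↦ (1/2)‖Ku − g^δ‖_G² over the ball {u ∈ U : ‖u‖_{X*} ≤ 1/α}. Then for every u ∈ U with ‖u‖_{X*} ≤ 1/α and every g ∈ G: ‖Ku − Kū‖_G² ≤ ‖Ku − g^δ‖_G² − ‖Kū − g^δ‖_G² ≤ (2/α)‖K*(g − g^δ)‖_X + 2·u(K*(g − g^δ)) + ‖Ku − g‖_G². -/

import Mathlib

open RealInnerProductSpace NormedSpace

/-- Functional error estimate for Ivanov (norm-constrained) regularization,
reduced formulation. -/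
theorem stmt_5
    {X G : Type*}
    [NormedAddCommGroup X] [NormedSpace ℝ X] [CompleteSpace X]
    [NormedAddCommGroup G] [InnerProductSpace ℝ G] [CompleteSpace G]
    (K : StrongDual ℝ X →L[ℝ] G) (Kstar : G →L[ℝ] X)
    (hadj : ∀ (u : StrongDual ℝ X) (g : G), ⟪K u, g⟫ = u (Kstar g))
    (gδ : G) (α : ℝ) (hα : 0 < α)
    (ubar : StrongDual ℝ X) (hubar : ‖ubar‖ ≤ 1/α)
    (hmin : ∀ u : StrongDual ℝ X, ‖u‖ ≤ 1/α →
      (1/2) * ‖K ubar - gδ‖^2 ≤ (1/2) * ‖K u - gδ‖^2) :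
    ∀ u : StrongDual ℝ X, ‖u‖ ≤ 1/α → ∀ g : G,
      ‖K u - K ubar‖^2 ≤ ‖K u - gδ‖^2 - ‖K ubar - gδ‖^2 ∧
      ‖K u - gδ‖^2 - ‖K ubar - gδ‖^2 ≤
        (2/α) * ‖Kstar (g - gδ)‖ + 2 * u (Kstar (g - gδ)) + ‖K u - g‖^2 := by
  intro u hu g
  set v : G := K u - K ubar with hv
  set w : G := K ubar - gδ with hw
  -- variational inequality
  have hkey : ∀ t : ℝ, 0 < t → t ≤ 1 → 0 ≤ 2 * t * ⟪v, w⟫ + t^2 * ‖v‖^2 := by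
    intro t ht ht1
    have hnorm : ‖ubar + t • (u - ubar)‖ ≤ 1/α := by
      have : ubar + t • (u - ubar) = (1 - t) • ubar + t • u := by
        module
      rw [this]
      calc ‖(1 - t) • ubar + t • u‖ ≤ ‖(1 - t) • ubar‖ + ‖t • u‖ := norm_add_le _ _
        _ = (1 - t) * ‖ubar‖ + t * ‖u‖ := by
            rw [norm_smul, norm_smul, Real.norm_eq_abs, Real.norm_eq_abs,
              abs_of_nonneg (by linarith), abs_of_nonneg ht.le]
        _ ≤ (1 - t) * (1/α) + t * (1/α) := by
            apply add_le_add
            · exact mul_le_mul_of_nonneg_left hubar (by linarith)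
            · exact mul_le_mul_of_nonneg_left hu ht.le
        _ = 1/α := by ring
    have hm := hmin _ hnorm
    have hKe : K (ubar + t • (u - ubar)) - gδ = w + t • v := by
      simp [hv, hw, map_add, map_smul, map_sub]
      abel
    rw [hKe] at hm
    have hexp : ‖w + t • v‖^2 = ‖w‖^2 + 2 * ⟪w, t • v⟫ + ‖t • v‖^2 :=
      norm_add_sq_real w (t • v)
    have h1 : ⟪w, t • v⟫ = t * ⟪v, w⟫ := by
      rw [real_inner_smul_right, real_inner_comm]
    have h2 : ‖t • v‖^2 = t^2 * ‖v‖^2 := by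
      rw [norm_smul, mul_pow, Real.norm_eq_abs, sq_abs]
    nlinarith [hm, hexp]
  have hvw : 0 ≤ ⟪v, w⟫ := by
    apply le_of_forall_pos_le_add
    intro ε hε
    have htpos : 0 < min 1 (2 * ε / (‖v‖^2 + 1)) := by
      apply lt_min one_pos
      positivity
    set t := min 1 (2 * ε / (‖v‖^2 + 1)) with htdef
    have ht1 : t ≤ 1 := min_le_left _ _
    have ht2 : t ≤ 2 * ε / (‖v‖^2 + 1) := min_le_right _ _
    have h := hkey t htpos ht1
    -- 0 ≤ 2t⟪v,w⟫ + t²‖v‖² so ⟪v,w⟫ ≥ -t‖v‖²/2 ≥ -ε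
    have hden : (0:ℝ) < ‖v‖^2 + 1 := by positivity
    have : t * (‖v‖^2 + 1) ≤ 2 * ε := by
      rw [← le_div_iff₀ hden]; exact ht2
    nlinarith [sq_nonneg ‖v‖, htpos]
  constructor
  · have hexp : ‖K u - gδ‖^2 = ‖v‖^2 + 2 * ⟪v, w⟫ + ‖w‖^2 := by
      have : K u - gδ = v + w := by rw [hv, hw]; abel
      rw [this, norm_add_sq_real]
    rw [hexp]
    nlinarith
  · -- second inequality
    have e1 : ‖K u - gδ‖^2 = ‖K u - g‖^2 + 2 * ⟪K u - g, g - gδ⟫ + ‖g - gδ‖^2 := by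
      have : K u - gδ = (K u - g) + (g - gδ) := by abel
      rw [this, norm_add_sq_real]
    have e2 : ‖K ubar - gδ‖^2 = ‖K ubar - g‖^2 + 2 * ⟪K ubar - g, g - gδ⟫ + ‖g - gδ‖^2 := by
      have : K ubar - gδ = (K ubar - g) + (g - gδ) := by abel
      rw [this, norm_add_sq_real]
    have i1 : ⟪K u - g, g - gδ⟫ = u (Kstar (g - gδ)) - ⟪g, g - gδ⟫ := by
      rw [inner_sub_left, hadj]
    have i2 : ⟪K ubar - g, g - gδ⟫ = ubar (Kstar (g - gδ)) - ⟪g, g - gδ⟫ := by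
      rw [inner_sub_left, hadj]
    have hbound : -(ubar (Kstar (g - gδ))) ≤ (1/α) * ‖Kstar (g - gδ)‖ := by
      have h2 : ‖ubar (Kstar (g - gδ))‖ ≤ ‖ubar‖ * ‖Kstar (g - gδ)‖ :=
        ubar.le_opNorm _
      calc -(ubar (Kstar (g - gδ))) ≤ ‖ubar (Kstar (g - gδ))‖ := by
            rw [Real.norm_eq_abs]; exact neg_le_abs _
        _ ≤ ‖ubar‖ * ‖Kstar (g - gδ)‖ := h2
        _ ≤ (1/α) * ‖Kstar (g - gδ)‖ := by
            apply mul_le_mul_of_nonneg_right hubar (norm_nonneg _)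
    have hsq : 0 ≤ ‖K ubar - g‖^2 := sq_nonneg _
    rw [e1, e2, i1, i2]
    have hrw : (2/α) * ‖Kstar (g - gδ)‖ = 2 * ((1/α) * ‖Kstar (g - gδ)‖) := by ring
    rw [hrw]
    linarith
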